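/- Let D₁, D₂, D₃, D₄ be diagonal m×m real matrices and A, B ∈ O(m) orthogonal matrices with D₁² = Iₘ + D₃², D₂² = Iₘ + D₄², and D₃AᵀD₂ = D₁BD₄, where all diagonal entries of D₃ and D₄ are nonzero. Then A·D₁⁻²D₃²·Aᵀ = D₂⁻²D₄² and B·D₂⁻²D₄²·Bᵀ = D₁⁻²D₃², and consequently trace(D₁²) = trace(D₂²). -/

import Mathlib

open Matrix

private lemma dinv_mul {m : ℕ} (v : Fin m → ℝ) (hv : ∀ i, v i ≠ 0) :
    diagonal (fun i => (v i)⁻¹) * diagonal v = 1 := by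
  rw [diagonal_mul_diagonal,
    show (fun i => (v i)⁻¹ * v i) = fun _ => (1:ℝ) from funext fun i => inv_mul_cancel₀ (hv i),
    diagonal_one]

private lemma mul_dinv {m : ℕ} (v : Fin m → ℝ) (hv : ∀ i, v i ≠ 0) :
    diagonal v * diagonal (fun i => (v i)⁻¹) = 1 := by
  rw [diagonal_mul_diagonal,
    show (fun i => v i * (v i)⁻¹) = fun _ => (1:ℝ) from funext fun i => mul_inv_cancel₀ (hv i),
    diagonal_one]

private lemma diag_inv' {m : ℕ} (v : Fin m → ℝ) (hv : ∀ i, v i ≠ 0) :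
    (diagonal v)⁻¹ = diagonal (fun i => (v i)⁻¹) :=
  inv_eq_right_inv (mul_dinv v hv)

private lemma aux_conj {m : ℕ} (A B : Matrix (Fin m) (Fin m) ℝ) (u q p : Fin m → ℝ)
    (hB : Bᵀ * B = 1)
    (h : diagonal u * Aᵀ * diagonal q = B * diagonal p)
    (hq : ∀ i, q i ≠ 0) :
    A * diagonal (fun i => u i * u i) * Aᵀ =
      diagonal (fun i => (q i)⁻¹ * (p i * p i) * (q i)⁻¹) := by
  have eq1 : (B * diagonal p)ᵀ * (B * diagonal p) = diagonal (fun i => p i * p i) := by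
    rw [transpose_mul, diagonal_transpose, mul_assoc, ← mul_assoc Bᵀ, hB, one_mul,
      diagonal_mul_diagonal]
  have eq2 : (B * diagonal p)ᵀ * (B * diagonal p) =
      diagonal q * (A * diagonal (fun i => u i * u i) * Aᵀ) * diagonal q := by
    rw [← h]
    calc (diagonal u * Aᵀ * diagonal q)ᵀ * (diagonal u * Aᵀ * diagonal q)
        = diagonal q * (A * ((diagonal u * diagonal u) * (Aᵀ * diagonal q))) := by
          simp only [transpose_mul, diagonal_transpose, transpose_transpose, Matrix.mul_assoc]
      _ = diagonal q * (A * diagonal (fun i => u i * u i) * Aᵀ) * diagonal q := by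
          rw [diagonal_mul_diagonal]; simp only [Matrix.mul_assoc]
  have e3 : diagonal q * (A * diagonal (fun i => u i * u i) * Aᵀ) * diagonal q =
      diagonal (fun i => p i * p i) := by rw [← eq2, eq1]
  have := congrArg
    (fun X => diagonal (fun i => (q i)⁻¹) * X * diagonal (fun i => (q i)⁻¹)) e3
  rw [← mul_assoc, ← mul_assoc, dinv_mul q hq, one_mul, mul_assoc _ (diagonal q),
    mul_dinv q hq, mul_one] at this
  rw [this, diagonal_mul_diagonal, diagonal_mul_diagonal]

theorem stmt_17 (m : ℕ) (D₁ D₂ D₃ D₄ A B : Matrix (Fin m) (Fin m) ℝ)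
    (hD₁ : D₁.IsDiag) (hD₂ : D₂.IsDiag) (hD₃ : D₃.IsDiag) (hD₄ : D₄.IsDiag)
    (hA : Aᵀ * A = 1) (hB : Bᵀ * B = 1)
    (h1 : D₁ * D₁ = 1 + D₃ * D₃) (h2 : D₂ * D₂ = 1 + D₄ * D₄)
    (h3 : D₃ * Aᵀ * D₂ = D₁ * B * D₄)
    (h3nz : ∀ i, D₃ i i ≠ 0) (h4nz : ∀ i, D₄ i i ≠ 0) :
    A * ((D₁ * D₁)⁻¹ * (D₃ * D₃)) * Aᵀ = (D₂ * D₂)⁻¹ * (D₄ * D₄) ∧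
      B * ((D₂ * D₂)⁻¹ * (D₄ * D₄)) * Bᵀ = (D₁ * D₁)⁻¹ * (D₃ * D₃) ∧
      (D₁ * D₁).trace = (D₂ * D₂).trace := by
  obtain ⟨d₁, rfl⟩ : ∃ d, D₁ = diagonal d := ⟨_, hD₁.diagonal_diag.symm⟩
  obtain ⟨d₂, rfl⟩ : ∃ d, D₂ = diagonal d := ⟨_, hD₂.diagonal_diag.symm⟩
  obtain ⟨d₃, rfl⟩ : ∃ d, D₃ = diagonal d := ⟨_, hD₃.diagonal_diag.symm⟩
  obtain ⟨d₄, rfl⟩ : ∃ d, D₄ = diagonal d := ⟨_, hD₄.diagonal_diag.symm⟩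
  have h1' : ∀ i, d₁ i * d₁ i = 1 + d₃ i * d₃ i := fun i => by
    simpa using congrFun (congrFun h1 i) i
  have h2' : ∀ i, d₂ i * d₂ i = 1 + d₄ i * d₄ i := fun i => by
    simpa using congrFun (congrFun h2 i) i
  have h1nz : ∀ i, d₁ i ≠ 0 := by
    intro i hi
    have := h1' i; rw [hi] at this
    nlinarith [mul_self_nonneg (d₃ i)]
  have h2nz : ∀ i, d₂ i ≠ 0 := by
    intro i hi
    have := h2' i; rw [hi] at this
    nlinarith [mul_self_nonneg (d₄ i)]
  have hAAt : A * Aᵀ = 1 := mul_eq_one_comm.mp hA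
  -- relation with D₁ inverted
  have h3u : diagonal (fun i => (d₁ i)⁻¹ * d₃ i) * Aᵀ * diagonal d₂ = B * diagonal d₄ := by
    have := congrArg (fun X => diagonal (fun i => (d₁ i)⁻¹) * X) h3
    simp only [← Matrix.mul_assoc] at this
    rw [dinv_mul d₁ h1nz, one_mul, diagonal_mul_diagonal] at this
    exact this
  -- relation with D₂ inverted (transposed)
  have h3t : diagonal (fun i => (d₂ i)⁻¹ * d₄ i) * Bᵀ * diagonal d₁ = A * diagonal d₃ := by
    have ht := congrArg transpose h3
    simp only [transpose_mul, diagonal_transpose, transpose_transpose,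
      ← Matrix.mul_assoc] at ht
    -- ht : diagonal d₂ * A * diagonal d₃ = diagonal d₄ * Bᵀ * diagonal d₁
    have := congrArg (fun X => diagonal (fun i => (d₂ i)⁻¹) * X) ht.symm
    simp only [← Matrix.mul_assoc] at this
    rw [dinv_mul d₂ h2nz, one_mul, diagonal_mul_diagonal] at this
    exact this
  have claim1 : A * diagonal (fun i => ((d₁ i)⁻¹ * d₃ i) * ((d₁ i)⁻¹ * d₃ i)) * Aᵀ =
      diagonal (fun i => (d₂ i)⁻¹ * (d₄ i * d₄ i) * (d₂ i)⁻¹) :=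
    aux_conj A B (fun i => (d₁ i)⁻¹ * d₃ i) d₂ d₄ hB h3u h2nz
  have claim2 : B * diagonal (fun i => ((d₂ i)⁻¹ * d₄ i) * ((d₂ i)⁻¹ * d₄ i)) * Bᵀ =
      diagonal (fun i => (d₁ i)⁻¹ * (d₃ i * d₃ i) * (d₁ i)⁻¹) :=
    aux_conj B A (fun i => (d₂ i)⁻¹ * d₄ i) d₁ d₃ hA h3t h1nz
  have h1sq : ∀ i, d₁ i * d₁ i ≠ 0 := fun i => mul_ne_zero (h1nz i) (h1nz i)
  have h2sq : ∀ i, d₂ i * d₂ i ≠ 0 := fun i => mul_ne_zero (h2nz i) (h2nz i)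
  have efun1 : (fun i => (d₁ i * d₁ i)⁻¹ * (d₃ i * d₃ i)) =
      fun i => ((d₁ i)⁻¹ * d₃ i) * ((d₁ i)⁻¹ * d₃ i) := funext fun i => by
    field_simp
    try ring
  have efun2 : (fun i => (d₂ i * d₂ i)⁻¹ * (d₄ i * d₄ i)) =
      fun i => ((d₂ i)⁻¹ * d₄ i) * ((d₂ i)⁻¹ * d₄ i) := funext fun i => by
    field_simp
    try ring
  have erhs1 : (fun i => (d₂ i)⁻¹ * (d₄ i * d₄ i) * (d₂ i)⁻¹) =
      fun i => (d₂ i * d₂ i)⁻¹ * (d₄ i * d₄ i) := funext fun i => by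
    field_simp
    try ring
  have erhs2 : (fun i => (d₁ i)⁻¹ * (d₃ i * d₃ i) * (d₁ i)⁻¹) =
      fun i => (d₁ i * d₁ i)⁻¹ * (d₃ i * d₃ i) := funext fun i => by
    field_simp
    try ring
  rw [diagonal_mul_diagonal d₁ d₁, diagonal_mul_diagonal d₂ d₂,
    diagonal_mul_diagonal d₃ d₃, diagonal_mul_diagonal d₄ d₄,
    diag_inv' _ h1sq, diag_inv' _ h2sq, diagonal_mul_diagonal, diagonal_mul_diagonal]
  refine ⟨?_, ?_, ?_⟩
  · rw [efun1, claim1, erhs1]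
  · rw [efun2, claim2, erhs2]
  · -- trace equality
    -- permutation relation
    have hc : A * diagonal (fun i => ((d₁ i)⁻¹ * d₃ i) * ((d₁ i)⁻¹ * d₃ i)) =
        diagonal (fun i => (d₂ i)⁻¹ * (d₄ i * d₄ i) * (d₂ i)⁻¹) * A := by
      calc A * diagonal (fun i => ((d₁ i)⁻¹ * d₃ i) * ((d₁ i)⁻¹ * d₃ i))
          = A * diagonal (fun i => ((d₁ i)⁻¹ * d₃ i) * ((d₁ i)⁻¹ * d₃ i)) * (Aᵀ * A) := by
            rw [hA, mul_one]
        _ = (A * diagonal (fun i => ((d₁ i)⁻¹ * d₃ i) * ((d₁ i)⁻¹ * d₃ i)) * Aᵀ) * A := by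
            simp only [Matrix.mul_assoc]
        _ = diagonal (fun i => (d₂ i)⁻¹ * (d₄ i * d₄ i) * (d₂ i)⁻¹) * A := by rw [claim1]
    have key : ∀ j i, A j i * (d₁ i * d₁ i) = (d₂ j * d₂ j) * A j i := by
      intro j i
      by_cases hz : A j i = 0
      · simp [hz]
      · have he := congrFun (congrFun hc j) i
        rw [mul_diagonal, diagonal_mul] at he
        have hval : ((d₁ i)⁻¹ * d₃ i) * ((d₁ i)⁻¹ * d₃ i) =
            (d₂ j)⁻¹ * (d₄ j * d₄ j) * (d₂ j)⁻¹ := by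
          have := he
          rw [mul_comm ((d₂ j)⁻¹ * (d₄ j * d₄ j) * (d₂ j)⁻¹) (A j i)] at this
          exact mul_left_cancel₀ hz this
        field_simp at hval
        rw [div_eq_div_iff (pow_ne_zero 2 (h1nz i)) (pow_ne_zero 2 (h2nz j))] at hval
        simp only [sq] at hval
        rw [h1' i, h2' j] at hval
        have hd : d₃ i * d₃ i = d₄ j * d₄ j := by nlinarith [hval]
        rw [h1' i, h2' j, hd, mul_comm]
    have hmat : A * diagonal (fun i => d₁ i * d₁ i) = diagonal (fun j => d₂ j * d₂ j) * A := by
      ext j i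
      rw [mul_diagonal, diagonal_mul]
      exact key j i
    calc trace (diagonal (fun i => d₁ i * d₁ i))
        = trace ((diagonal (fun i => d₁ i * d₁ i) * Aᵀ) * A) := by
          rw [mul_assoc, hA, mul_one]
      _ = trace (A * diagonal (fun i => d₁ i * d₁ i) * Aᵀ) := by
          rw [trace_mul_comm, ← mul_assoc]
      _ = trace (diagonal (fun j => d₂ j * d₂ j) * A * Aᵀ) := by rw [hmat]
      _ = trace (diagonal (fun i => d₂ i * d₂ i)) := by rw [mul_assoc, hAAt, mul_one]
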